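/- Let Ω be a non-empty bounded open subset of ℝ^d, θ a unit vector, and A a non-empty Borel subset of ∂_θ Ω. Then μ_θ(A) > 0 if and only if λ^{d−1}(P_θ(A)) > 0, where P_θ is the orthogonal projection onto the hyperplane orthogonal to θ, λ^{d−1} is the (d−1)-dimensional Lebesgue measure on that hyperplane, and μ_θ is the directional boundary measure. -/

import Mathlib

open Set MeasureTheory
open scoped RealInnerProductSpace

noncomputable def dirDelta {d : ℕ} (Ω : Set (EuclideanSpace ℝ (Fin d)))
    (θ x : EuclideanSpace ℝ (Fin d)) : ℝ :=
  sSup {s : ℝ | 0 ≤ s ∧ ∀ t : ℝ, 0 ≤ t → t < s → x + t • θ ∈ Ω}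

noncomputable def exitPoint {d : ℕ} (Ω : Set (EuclideanSpace ℝ (Fin d)))
    (θ x : EuclideanSpace ℝ (Fin d)) : EuclideanSpace ℝ (Fin d) :=
  x + dirDelta Ω θ x • θ

noncomputable def dirMeas {d : ℕ} (Ω : Set (EuclideanSpace ℝ (Fin d)))
    (θ : EuclideanSpace ℝ (Fin d)) (A : Set (EuclideanSpace ℝ (Fin d))) : ENNReal :=
  volume {x | x ∈ Ω ∧ exitPoint Ω θ x ∈ A}

def dirBoundary {d : ℕ} (Ω : Set (EuclideanSpace ℝ (Fin d)))
    (θ : EuclideanSpace ℝ (Fin d)) : Set (EuclideanSpace ℝ (Fin d)) :=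
  {z ∈ closure Ω \ Ω | ∃ r : ℝ, 0 < r ∧ ∀ t : ℝ, 0 < t → t < r → z - t • θ ∈ Ω}

noncomputable def hypProj {d : ℕ} (θ x : EuclideanSpace ℝ (Fin d)) :
    EuclideanSpace ℝ (Fin d) :=
  x - ⟪x, θ⟫ • θ

namespace Stmt7Aux

open Bornology Metric

variable {d : ℕ}

def dSet (Ω : Set (EuclideanSpace ℝ (Fin d))) (θ x : EuclideanSpace ℝ (Fin d)) : Set ℝ :=
  {s : ℝ | 0 ≤ s ∧ ∀ t : ℝ, 0 ≤ t → t < s → x + t • θ ∈ Ω}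

lemma dirDelta_def (Ω : Set (EuclideanSpace ℝ (Fin d))) (θ x : EuclideanSpace ℝ (Fin d)) :
    dirDelta Ω θ x = sSup (dSet Ω θ x) := rfl

lemma zero_mem_dSet (Ω : Set (EuclideanSpace ℝ (Fin d))) (θ x : EuclideanSpace ℝ (Fin d)) :
    (0:ℝ) ∈ dSet Ω θ x :=
  ⟨le_rfl, fun t ht hts => absurd (ht.trans_lt hts) (lt_irrefl _)⟩

lemma bddAbove_dSet {Ω : Set (EuclideanSpace ℝ (Fin d))} (hbd : IsBounded Ω)
    {θ : EuclideanSpace ℝ (Fin d)} (hθ : ‖θ‖ = 1) (x : EuclideanSpace ℝ (Fin d)) :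
    BddAbove (dSet Ω θ x) := by
  obtain ⟨R, hR⟩ := hbd.subset_ball 0
  refine ⟨max 0 (R + ‖x‖), fun s hs => ?_⟩
  by_contra hlt
  push_neg at hlt
  set c : ℝ := max 0 (R + ‖x‖) with hc
  have ht0 : (0:ℝ) ≤ c := le_max_left _ _
  have hmem := hs.2 _ ht0 hlt
  have h1 : ‖x + c • θ‖ < R := by simpa [mem_ball, dist_zero_right] using hR hmem
  have h2 : ‖c • θ‖ = c := by
    rw [norm_smul, hθ, mul_one, Real.norm_eq_abs, abs_of_nonneg ht0]
  have h3 : ‖(x + c • θ) - x‖ ≤ ‖x + c • θ‖ + ‖x‖ := norm_sub_le _ _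
  rw [add_sub_cancel_left, h2] at h3
  have h4 : R + ‖x‖ ≤ c := le_max_right _ _
  linarith

lemma dirDelta_nonneg {Ω : Set (EuclideanSpace ℝ (Fin d))} (hbd : IsBounded Ω)
    {θ : EuclideanSpace ℝ (Fin d)} (hθ : ‖θ‖ = 1) (x : EuclideanSpace ℝ (Fin d)) :
    0 ≤ dirDelta Ω θ x :=
  le_csSup (bddAbove_dSet hbd hθ x) (zero_mem_dSet Ω θ x)

lemma dirDelta_sub_smul {Ω : Set (EuclideanSpace ℝ (Fin d))} (hbd : IsBounded Ω)
    {θ : EuclideanSpace ℝ (Fin d)} (hθ : ‖θ‖ = 1) {z : EuclideanSpace ℝ (Fin d)} {t r : ℝ}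
    (hz : z ∉ Ω) (hmem : ∀ u : ℝ, 0 < u → u < r → z - u • θ ∈ Ω)
    (h0 : 0 < t) (htr : t < r) : dirDelta Ω θ (z - t • θ) = t := by
  rw [dirDelta_def]
  apply le_antisymm
  · apply csSup_le ⟨0, zero_mem_dSet Ω θ _⟩
    intro s hs
    by_contra hlt
    push_neg at hlt
    have h := hs.2 t h0.le hlt
    rw [sub_add_cancel] at h
    exact hz h
  · apply le_csSup (bddAbove_dSet hbd hθ _)
    refine ⟨h0.le, fun u hu hut => ?_⟩
    have h : z - t • θ + u • θ = z - (t - u) • θ := by module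
    rw [h]
    exact hmem _ (by linarith) (by linarith)

lemma exitPoint_sub_smul {Ω : Set (EuclideanSpace ℝ (Fin d))} (hbd : IsBounded Ω)
    {θ : EuclideanSpace ℝ (Fin d)} (hθ : ‖θ‖ = 1) {z : EuclideanSpace ℝ (Fin d)} {t r : ℝ}
    (hz : z ∉ Ω) (hmem : ∀ u : ℝ, 0 < u → u < r → z - u • θ ∈ Ω)
    (h0 : 0 < t) (htr : t < r) : exitPoint Ω θ (z - t • θ) = z := by
  rw [exitPoint, dirDelta_sub_smul hbd hθ hz hmem h0 htr, sub_add_cancel]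

lemma dirDelta_gt {Ω : Set (EuclideanSpace ℝ (Fin d))} (hopen : IsOpen Ω) (hbd : IsBounded Ω)
    {θ : EuclideanSpace ℝ (Fin d)} (hθ : ‖θ‖ = 1) {x : EuclideanSpace ℝ (Fin d)} {a : ℝ}
    (ha : 0 ≤ a) (h : ∀ t ∈ Icc (0:ℝ) a, x + t • θ ∈ Ω) : a < dirDelta Ω θ x := by
  have hK : IsCompact ((fun t : ℝ => x + t • θ) '' Icc 0 a) :=
    isCompact_Icc.image (by continuity)
  have hKΩ : ((fun t : ℝ => x + t • θ) '' Icc 0 a) ⊆ Ω := image_subset_iff.mpr h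
  obtain ⟨ε, hε, hsub⟩ := hK.exists_thickening_subset_open hopen hKΩ
  have hmem : a + ε ∈ dSet Ω θ x := by
    refine ⟨by linarith, fun t ht hta => ?_⟩
    rcases le_or_gt t a with h1 | h1
    · exact h t ⟨ht, h1⟩
    · apply hsub
      rw [Metric.mem_thickening_iff]
      refine ⟨x + a • θ, ⟨a, ⟨ha, le_rfl⟩, rfl⟩, ?_⟩
      rw [dist_eq_norm]
      have he : x + t • θ - (x + a • θ) = (t - a) • θ := by module
      rw [he, norm_smul, hθ, mul_one, Real.norm_eq_abs, abs_of_pos (by linarith)]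
      linarith
  calc a < a + ε := by linarith
    _ ≤ dirDelta Ω θ x := le_csSup (bddAbove_dSet hbd hθ x) hmem

lemma measurable_dirDelta {Ω : Set (EuclideanSpace ℝ (Fin d))} (hopen : IsOpen Ω)
    (hbd : IsBounded Ω) {θ : EuclideanSpace ℝ (Fin d)} (hθ : ‖θ‖ = 1) :
    Measurable (dirDelta Ω θ) := by
  apply measurable_of_Ioi
  intro a
  rcases lt_or_ge a 0 with ha | ha
  · have h : dirDelta Ω θ ⁻¹' Ioi a = univ :=
      eq_univ_of_forall fun x => lt_of_lt_of_le ha (dirDelta_nonneg hbd hθ x)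
    rw [h]; exact MeasurableSet.univ
  · have hset : dirDelta Ω θ ⁻¹' Ioi a = {x | ∀ t ∈ Icc (0:ℝ) a, x + t • θ ∈ Ω} := by
      ext x
      constructor
      · intro hx
        obtain ⟨s, hs, has⟩ := exists_lt_of_lt_csSup ⟨0, zero_mem_dSet Ω θ x⟩ hx
        exact fun t ht => hs.2 t ht.1 (lt_of_le_of_lt ht.2 has)
      · intro hx
        exact dirDelta_gt hopen hbd hθ ha hx
    rw [hset]
    apply IsOpen.measurableSet
    rw [Metric.isOpen_iff]
    intro x hx
    have hK : IsCompact ((fun t : ℝ => x + t • θ) '' Icc 0 a) :=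
      isCompact_Icc.image (by continuity)
    have hKΩ : ((fun t : ℝ => x + t • θ) '' Icc 0 a) ⊆ Ω := image_subset_iff.mpr hx
    obtain ⟨ε, hε, hsub⟩ := hK.exists_thickening_subset_open hopen hKΩ
    refine ⟨ε, hε, fun x' hx' t ht => ?_⟩
    apply hsub
    rw [Metric.mem_thickening_iff]
    refine ⟨x + t • θ, ⟨t, ht, rfl⟩, ?_⟩
    have hd : dist (x' + t • θ) (x + t • θ) = dist x' x := by
      rw [dist_eq_norm, dist_eq_norm]
      congr 1
      abel
    rw [hd]
    exact hx'

lemma measurable_exitPoint {Ω : Set (EuclideanSpace ℝ (Fin d))} (hopen : IsOpen Ω)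
    (hbd : IsBounded Ω) {θ : EuclideanSpace ℝ (Fin d)} (hθ : ‖θ‖ = 1) :
    Measurable (exitPoint Ω θ) :=
  measurable_id.add ((measurable_dirDelta hopen hbd hθ).smul measurable_const)


noncomputable def theta0 (n : ℕ) : EuclideanSpace ℝ (Fin (n+1)) :=
  EuclideanSpace.single 0 1

lemma norm_theta0 (n : ℕ) : ‖theta0 n‖ = 1 := by
  simp [theta0]

noncomputable def rho (n : ℕ) (p : ℝ × (Fin n → ℝ)) : EuclideanSpace ℝ (Fin (n+1)) :=
  (WithLp.equiv 2 (Fin (n+1) → ℝ)).symm (Fin.cons p.1 p.2)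

def pi2 (n : ℕ) (z : EuclideanSpace ℝ (Fin (n+1))) : Fin n → ℝ :=
  fun j => z j.succ

lemma rho_apply_zero (n : ℕ) (p : ℝ × (Fin n → ℝ)) : rho n p 0 = p.1 := rfl

lemma rho_apply_succ (n : ℕ) (p : ℝ × (Fin n → ℝ)) (j : Fin n) : rho n p j.succ = p.2 j := rfl

lemma pi2_rho (n : ℕ) (p : ℝ × (Fin n → ℝ)) : pi2 n (rho n p) = p.2 := by
  funext j; rfl

lemma euclidean_ext {n : ℕ} {x y : EuclideanSpace ℝ (Fin (n+1))}
    (h0 : x 0 = y 0) (hs : ∀ j : Fin n, x j.succ = y j.succ) : x = y := by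
  ext i
  rcases Fin.eq_zero_or_eq_succ i with rfl | ⟨j, rfl⟩
  · exact h0
  · exact hs j

lemma theta0_apply_zero (n : ℕ) : theta0 n 0 = 1 := by
  simp [theta0, EuclideanSpace.single_apply]

lemma theta0_apply_succ (n : ℕ) (j : Fin n) : theta0 n j.succ = 0 := by
  simp [theta0, EuclideanSpace.single_apply, Fin.succ_ne_zero]

lemma rho_add_smul (n : ℕ) (t s : ℝ) (y : Fin n → ℝ) :
    rho n (t, y) + s • theta0 n = rho n (t + s, y) := by
  apply euclidean_ext
  · simp [rho_apply_zero, theta0_apply_zero, PiLp.add_apply, PiLp.smul_apply]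
  · intro j
    simp [rho_apply_succ, theta0_apply_succ, PiLp.add_apply, PiLp.smul_apply]

lemma rho_sub_smul (n : ℕ) (t s : ℝ) (y : Fin n → ℝ) :
    rho n (t, y) - s • theta0 n = rho n (t - s, y) := by
  rw [sub_eq_add_neg, ← neg_smul, rho_add_smul, sub_eq_add_neg]

lemma pi2_add_smul (n : ℕ) (z : EuclideanSpace ℝ (Fin (n+1))) (s : ℝ) :
    pi2 n (z + s • theta0 n) = pi2 n z := by
  funext j
  simp [pi2, PiLp.add_apply, PiLp.smul_apply, theta0_apply_succ]

lemma rho_coord (n : ℕ) (z : EuclideanSpace ℝ (Fin (n+1))) : rho n (z 0, pi2 n z) = z := by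
  apply euclidean_ext
  · simp [rho_apply_zero]
  · intro j; simp [rho_apply_succ, pi2]

lemma hypProj_theta0 (n : ℕ) (z : EuclideanSpace ℝ (Fin (n+1))) :
    hypProj (theta0 n) z = rho n (0, pi2 n z) := by
  have hi : ⟪z, theta0 n⟫ = z 0 := by
    simp [theta0, EuclideanSpace.inner_single_right]
  rw [hypProj, hi]
  apply euclidean_ext
  · simp [rho_apply_zero, theta0_apply_zero, PiLp.sub_apply, PiLp.smul_apply]
  · intro j
    simp [rho_apply_succ, theta0_apply_succ, PiLp.sub_apply, PiLp.smul_apply, pi2]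

lemma hypProj_theta0_coord_zero (n : ℕ) (z : EuclideanSpace ℝ (Fin (n+1))) :
    hypProj (theta0 n) z 0 = 0 := by
  rw [hypProj_theta0, rho_apply_zero]

lemma pi2_hypProj (n : ℕ) (z : EuclideanSpace ℝ (Fin (n+1))) :
    pi2 n (hypProj (theta0 n) z) = pi2 n z := by
  rw [hypProj_theta0, pi2_rho]

noncomputable def Phi (n : ℕ) : EuclideanSpace ℝ (Fin (n+1)) ≃ᵐ ℝ × (Fin n → ℝ) :=
  (MeasurableEquiv.toLp 2 (Fin (n+1) → ℝ)).symm.trans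
    (MeasurableEquiv.piFinSuccAbove (fun _ : Fin (n+1) => ℝ) 0)

lemma measurePreserving_Phi (n : ℕ) : MeasurePreserving (Phi n) volume volume := by
  have h1 := EuclideanSpace.volume_preserving_symm_measurableEquiv_toLp (Fin (n+1))
  have h2 := volume_preserving_piFinSuccAbove (fun _ : Fin (n+1) => ℝ) 0
  exact h2.comp h1

lemma Phi_symm_apply (n : ℕ) (p : ℝ × (Fin n → ℝ)) : (Phi n).symm p = rho n p := by
  show (MeasurableEquiv.toLp 2 (Fin (n+1) → ℝ))
      ((MeasurableEquiv.piFinSuccAbove (fun _ : Fin (n+1) => ℝ) 0).symm p) = rho n p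
  apply euclidean_ext
  · simp [MeasurableEquiv.piFinSuccAbove, rho_apply_zero,
      MeasurableEquiv.coe_toLp]
  · intro j
    simp [MeasurableEquiv.piFinSuccAbove, rho_apply_succ,
      MeasurableEquiv.coe_toLp, Fin.insertNthEquiv]


open Bornology in
lemma key (n : ℕ) (Ω : Set (EuclideanSpace ℝ (Fin (n+1))))
    (hopen : IsOpen Ω) (hbd : IsBounded Ω)
    (A : Set (EuclideanSpace ℝ (Fin (n+1)))) (hAmeas : MeasurableSet A)
    (hA : A ⊆ dirBoundary Ω (theta0 n)) :
    (0 < dirMeas Ω (theta0 n) A ↔ 0 < volume (pi2 n '' A)) := by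
  have hθ : ‖theta0 n‖ = 1 := norm_theta0 n
  set Es : Set (EuclideanSpace ℝ (Fin (n+1))) :=
    {x | x ∈ Ω ∧ exitPoint Ω (theta0 n) x ∈ A} with hEs
  have hEm : MeasurableSet Es :=
    hopen.measurableSet.inter ((measurable_exitPoint hopen hbd hθ) hAmeas)
  have hS'm : MeasurableSet ((Phi n) '' Es) := (Phi n).measurableSet_image.mpr hEm
  have himg : (Phi n) '' Es = (Phi n).symm ⁻¹' Es := (Phi n).image_eq_preimage_symm Es
  have hμ : dirMeas Ω (theta0 n) A = volume ((Phi n) '' Es) := by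
    rw [himg, ((measurePreserving_Phi n).symm (Phi n)).measure_preimage
      hEm.nullMeasurableSet]
    rfl
  have hprod : volume ((Phi n) '' Es) =
      ∫⁻ y, volume ((fun t => (t, y)) ⁻¹' ((Phi n) '' Es)) := by
    rw [Measure.volume_eq_prod, Measure.prod_apply_symm hS'm]
  set g : (Fin n → ℝ) → ENNReal :=
    fun y => volume ((fun t => (t, y)) ⁻¹' ((Phi n) '' Es)) with hg
  have hgm : Measurable g := measurable_measure_prodMk_right hS'm
  have hsupp : Function.support g = pi2 n '' A := by
    ext y
    simp only [Function.mem_support, hg]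
    constructor
    · intro hy
      obtain ⟨t, ht⟩ := nonempty_of_measure_ne_zero hy
      rw [mem_preimage, himg, mem_preimage, Phi_symm_apply] at ht
      obtain ⟨hxΩ, hxA⟩ := ht
      refine ⟨exitPoint Ω (theta0 n) (rho n (t, y)), hxA, ?_⟩
      rw [exitPoint, pi2_add_smul, pi2_rho]
    · rintro ⟨z, hzA, rfl⟩
      obtain ⟨⟨hzc, hznΩ⟩, r, hr, hmem⟩ := hA hzA
      have hsub : Ioo (z 0 - r) (z 0) ⊆ (fun t => (t, pi2 n z)) ⁻¹' ((Phi n) '' Es) := by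
        intro t ht
        rw [mem_preimage, himg, mem_preimage, Phi_symm_apply]
        have hx : rho n (t, pi2 n z) = z - (z 0 - t) • theta0 n := by
          rw [← rho_coord n z, rho_sub_smul, pi2_rho, rho_apply_zero]
          ring_nf
        have hu1 : 0 < z 0 - t := by linarith [ht.2]
        have hu2 : z 0 - t < r := by linarith [ht.1]
        constructor
        · rw [hx]; exact hmem _ hu1 hu2
        · rw [hx, exitPoint_sub_smul hbd hθ hznΩ hmem hu1 hu2]; exact hzA
      intro h0
      have hle : volume (Ioo (z 0 - r) (z 0)) ≤
          volume ((fun t => (t, pi2 n z)) ⁻¹' (⇑(Phi n) '' Es)) := measure_mono hsub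
      rw [Real.volume_Ioo, h0, sub_sub_cancel, nonpos_iff_eq_zero,
        ENNReal.ofReal_eq_zero] at hle
      linarith
  rw [hμ, hprod, lintegral_pos_iff_support hgm, hsupp]

lemma lip_pi2 (n : ℕ) : LipschitzWith 1 (pi2 n) := by
  have h1 : LipschitzWith 1 (WithLp.equiv 2 (Fin (n+1) → ℝ)) := PiLp.lipschitzWith_ofLp 2 _
  have h2 : LipschitzWith 1 (fun (x : Fin (n+1) → ℝ) (j : Fin n) => x j.succ) := by
    apply LipschitzWith.of_dist_le_mul
    intro x y
    rw [NNReal.coe_one, one_mul]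
    exact (dist_pi_le_iff dist_nonneg).mpr fun j => dist_le_pi_dist x y j.succ
  have h3 := h2.comp h1
  rw [mul_one] at h3
  exact h3

lemma exists_lip_iota (n : ℕ) :
    ∃ K : NNReal, LipschitzWith K (fun y : Fin n → ℝ => rho n (0, y)) := by
  have h1 := PiLp.antilipschitzWith_ofLp 2 (fun _ : Fin (n+1) => ℝ)
  have h2 : LipschitzWith _ ((WithLp.equiv 2 (Fin (n+1) → ℝ)).symm) :=
    h1.to_rightInverse (Equiv.rightInverse_symm _)
  have h3 : LipschitzWith 1 (fun (y : Fin n → ℝ) => (Fin.cons 0 y : Fin (n+1) → ℝ)) := by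
    apply LipschitzWith.of_dist_le_mul
    intro x y
    rw [NNReal.coe_one, one_mul]
    refine (dist_pi_le_iff dist_nonneg).mpr ?_
    intro i
    rcases Fin.eq_zero_or_eq_succ i with rfl | ⟨j, rfl⟩
    · simp only [Fin.cons_zero, dist_self]
      exact dist_nonneg
    · simpa [Fin.cons_succ] using dist_le_pi_dist x y j
  exact ⟨_, h2.comp h3⟩

lemma keyH (n : ℕ) (B : Set (EuclideanSpace ℝ (Fin (n+1)))) (hB : ∀ z ∈ B, z 0 = 0) :
    (0 < μH[(n : ℝ)] B ↔ 0 < volume (pi2 n '' B)) := by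
  obtain ⟨K, hK⟩ := exists_lip_iota n
  have hn : (0:ℝ) ≤ n := Nat.cast_nonneg n
  have hvol : (μH[(n:ℝ)] (pi2 n '' B) : ENNReal) = volume (pi2 n '' B) := by
    have h := hausdorffMeasure_pi_real (ι := Fin n)
    rw [Fintype.card_fin] at h
    rw [← h]
  have h1 : μH[(n:ℝ)] (pi2 n '' B) ≤ μH[(n:ℝ)] B := by
    have h := (lip_pi2 n).hausdorffMeasure_image_le hn B
    simpa using h
  have hBeq : (fun y => rho n (0, y)) '' (pi2 n '' B) = B := by
    rw [image_image]
    have h : ∀ z ∈ B, rho n (0, pi2 n z) = z := by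
      intro z hz
      rw [← hB z hz]
      exact rho_coord n z
    rw [image_congr h, image_id']
  have h2 : μH[(n:ℝ)] B ≤ (K : ENNReal) ^ (n:ℝ) * μH[(n:ℝ)] (pi2 n '' B) := by
    conv_lhs => rw [← hBeq]
    exact hK.hausdorffMeasure_image_le hn _
  constructor
  · intro h
    rw [pos_iff_ne_zero]
    intro h0
    rw [← hvol] at h0
    rw [h0, mul_zero, nonpos_iff_eq_zero] at h2
    rw [h2] at h
    exact lt_irrefl 0 h
  · intro h
    rw [← hvol] at h
    exact h.trans_le h1

section Transfer

variable {d : ℕ} (e : EuclideanSpace ℝ (Fin d) ≃ₗᵢ[ℝ] EuclideanSpace ℝ (Fin d))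

lemma dSet_map (Ω : Set (EuclideanSpace ℝ (Fin d))) (θ x : EuclideanSpace ℝ (Fin d)) :
    dSet (e '' Ω) (e θ) (e x) = dSet Ω θ x := by
  ext s
  simp only [dSet, mem_setOf_eq]
  refine and_congr_right fun _ => ?_
  refine forall_congr' fun t => imp_congr_right fun _ => imp_congr_right fun _ => ?_
  rw [← _root_.map_smul, ← map_add]
  exact e.injective.mem_set_image

lemma dirDelta_map (Ω : Set (EuclideanSpace ℝ (Fin d))) (θ x : EuclideanSpace ℝ (Fin d)) :
    dirDelta (e '' Ω) (e θ) (e x) = dirDelta Ω θ x := by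
  rw [dirDelta_def, dirDelta_def, dSet_map]

lemma exitPoint_map (Ω : Set (EuclideanSpace ℝ (Fin d))) (θ x : EuclideanSpace ℝ (Fin d)) :
    exitPoint (e '' Ω) (e θ) (e x) = e (exitPoint Ω θ x) := by
  rw [exitPoint, exitPoint, map_add, _root_.map_smul, dirDelta_map]

lemma dirMeas_map (Ω : Set (EuclideanSpace ℝ (Fin d))) (θ : EuclideanSpace ℝ (Fin d))
    (A : Set (EuclideanSpace ℝ (Fin d)))
    (hmeas : MeasurableSet {x | x ∈ e '' Ω ∧ exitPoint (e '' Ω) (e θ) x ∈ e '' A}) :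
    dirMeas (e '' Ω) (e θ) (e '' A) = dirMeas Ω θ A := by
  rw [dirMeas, dirMeas, ← e.measurePreserving.measure_preimage hmeas.nullMeasurableSet]
  congr 1
  ext x
  simp only [mem_preimage, mem_setOf_eq]
  rw [exitPoint_map]
  rw [e.injective.mem_set_image, e.injective.mem_set_image]

lemma dirBoundary_map (Ω : Set (EuclideanSpace ℝ (Fin d))) (θ : EuclideanSpace ℝ (Fin d))
    (A : Set (EuclideanSpace ℝ (Fin d))) (hA : A ⊆ dirBoundary Ω θ) :
    e '' A ⊆ dirBoundary (e '' Ω) (e θ) := by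
  rintro _ ⟨z, hz, rfl⟩
  obtain ⟨⟨h1, h2⟩, r, hr, hmem⟩ := hA hz
  refine ⟨⟨?_, ?_⟩, r, hr, fun t ht htr => ?_⟩
  · have hc : closure (⇑e '' Ω) = ⇑e '' closure Ω := (e.toHomeomorph.image_closure Ω).symm
    rw [hc]
    exact mem_image_of_mem _ h1
  · intro hmem'
    exact h2 (e.injective.mem_set_image.mp hmem')
  · rw [← _root_.map_smul, ← map_sub]
    exact mem_image_of_mem _ (hmem t ht htr)

lemma hypProj_map (θ x : EuclideanSpace ℝ (Fin d)) :
    hypProj (e θ) (e x) = e (hypProj θ x) := by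
  rw [hypProj, hypProj, map_sub, _root_.map_smul, e.inner_map_map]

end Transfer

end Stmt7Aux

open Stmt7Aux in
theorem stmt7 {d : ℕ} (Ω : Set (EuclideanSpace ℝ (Fin d)))
    (hopen : IsOpen Ω) (hne : Ω.Nonempty) (hbd : Bornology.IsBounded Ω)
    (θ : EuclideanSpace ℝ (Fin d)) (hθ : ‖θ‖ = 1)
    (A : Set (EuclideanSpace ℝ (Fin d))) (hAne : A.Nonempty)
    (hAmeas : MeasurableSet A) (hA : A ⊆ dirBoundary Ω θ) :
    0 < dirMeas Ω θ A ↔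
      0 < Measure.hausdorffMeasure ((d : ℝ) - 1) (hypProj θ '' A) := by
  cases d with
  | zero =>
      exfalso
      have h : θ = 0 := Subsingleton.elim θ 0
      rw [h, norm_zero] at hθ
      exact one_ne_zero hθ.symm
  | succ n =>
      have hnorm : ‖θ‖ = ‖theta0 n‖ := by rw [hθ, norm_theta0]
      set e : EuclideanSpace ℝ (Fin (n+1)) ≃ₗᵢ[ℝ] EuclideanSpace ℝ (Fin (n+1)) :=
        Submodule.reflection (ℝ ∙ (θ - theta0 n))ᗮ with he_def
      have heθ : e θ = theta0 n := Submodule.reflection_sub hnorm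
      -- properties of the transported data
      have hopen' : IsOpen (e '' Ω) := e.toHomeomorph.isOpen_image.mpr hopen
      have hbd' : Bornology.IsBounded (e '' Ω) := e.lipschitz.isBounded_image hbd
      have hAmeas' : MeasurableSet (e '' A) :=
        e.toHomeomorph.toMeasurableEquiv.measurableSet_image.mpr hAmeas
      have hA' : e '' A ⊆ dirBoundary (e '' Ω) (theta0 n) := by
        rw [← heθ]
        exact dirBoundary_map e Ω θ A hA
      have hθ0 : ‖theta0 n‖ = 1 := norm_theta0 n
      -- measurability of the exit set for the transported data
      have hEm : MeasurableSet {x | x ∈ e '' Ω ∧ exitPoint (e '' Ω) (theta0 n) x ∈ e '' A} :=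
        hopen'.measurableSet.inter ((measurable_exitPoint hopen' hbd' hθ0) hAmeas')
      have hEm' : MeasurableSet {x | x ∈ e '' Ω ∧ exitPoint (e '' Ω) (e θ) x ∈ e '' A} := by
        rw [heθ]; exact hEm
      -- left-hand side
      have hL : dirMeas Ω θ A = dirMeas (e '' Ω) (theta0 n) (e '' A) := by
        rw [← heθ]
        exact (dirMeas_map e Ω θ A hEm').symm
      -- right-hand side
      have himg : hypProj (theta0 n) '' (e '' A) = e '' (hypProj θ '' A) := by
        rw [image_image, image_image]
        apply image_congr
        intro z _
        rw [← heθ, hypProj_map]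
      have hexp : ((n + 1 : ℕ) : ℝ) - 1 = (n : ℝ) := by push_cast; ring
      have hR : Measure.hausdorffMeasure (((n+1 : ℕ) : ℝ) - 1) (hypProj θ '' A) =
          μH[(n : ℝ)] (hypProj (theta0 n) '' (e '' A)) := by
        rw [hexp, himg, e.isometry.hausdorffMeasure_image (Or.inr e.surjective)]
      rw [hL, hR]
      rw [key n (e '' Ω) hopen' hbd' (e '' A) hAmeas' hA']
      rw [keyH n (hypProj (theta0 n) '' (e '' A))
        (fun z hz => by obtain ⟨w, _, rfl⟩ := hz; exact hypProj_theta0_coord_zero n w)]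
      have hpi : pi2 n '' (hypProj (theta0 n) '' (e '' A)) = pi2 n '' (e '' A) := by
        rw [image_image]
        exact image_congr fun z _ => pi2_hypProj n z
      rw [hpi]
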